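/- Every group of affine bijections of the real line that is a GAF is a GAG. Equivalently, the group of all affine bijections of ℝ (maps x ↦ ax + b with a ≠ 0), acting on ℝ, is fixating. -/

import Mathlib

/-- The group of affine bijections of the real line is fixating: every subgroup
of the permutation group of `ℝ` consisting of affine maps `x ↦ a*x + b` (`a ≠ 0`),
each element of which has a fixed point (GAF), has a common fixed point (GAG). -/
theorem affine_bijections_real_line_fixating
    (H : Subgroup (Equiv.Perm ℝ))
    (haff : ∀ f ∈ H, ∃ a b : ℝ, a ≠ 0 ∧ ∀ x : ℝ, f x = a * x + b)
    (hGAF : ∀ f ∈ H, ∃ x : ℝ, f x = x) :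
    ∃ x : ℝ, ∀ f ∈ H, f x = x := by
  by_cases hid : ∀ f ∈ H, ∀ x : ℝ, f x = x
  · exact ⟨0, fun f hf => hid f hf 0⟩
  push_neg at hid
  obtain ⟨f, hf, x0, hx0⟩ := hid
  obtain ⟨a, b, ha0, hab⟩ := haff f hf
  have ha1 : a ≠ 1 := by
    intro h
    obtain ⟨y, hy⟩ := hGAF f hf
    rw [hab, h] at hy
    have hb : b = 0 := by linarith
    apply hx0
    rw [hab, h, hb]; ring
  have h1a : (1 : ℝ) - a ≠ 0 := sub_ne_zero.mpr (Ne.symm ha1)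
  set p : ℝ := b / (1 - a) with hp
  have hfp : f p = p := by
    rw [hab, hp]; field_simp; ring
  have huniq : ∀ y : ℝ, f y = y → y = p := by
    intro y hy
    rw [hab] at hy
    rw [hp, eq_div_iff h1a]
    linarith
  refine ⟨p, fun g hg => ?_⟩
  obtain ⟨c, d, hc0, hcd⟩ := haff g hg
  obtain ⟨a', b', ha'0, hab'⟩ := haff f⁻¹ (inv_mem hf)
  obtain ⟨c', d', hc'0, hcd'⟩ := haff g⁻¹ (inv_mem hg)
  have h1 : ∀ x : ℝ, x = a * (a' * x + b') + b := by
    intro x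
    conv_lhs => rw [← (show f (f⁻¹ x) = x from f.apply_symm_apply x)]
    rw [hab, hab']
  have h2 : ∀ x : ℝ, x = c * (c' * x + d') + d := by
    intro x
    conv_lhs => rw [← (show g (g⁻¹ x) = x from g.apply_symm_apply x)]
    rw [hcd, hcd']
  have haa' : a * a' = 1 := by linear_combination h1 0 - h1 1
  have hcc' : c * c' = 1 := by linear_combination h2 0 - h2 1
  have hkmem : f * g * f⁻¹ * g⁻¹ ∈ H := by
    exact mul_mem (mul_mem (mul_mem hf hg) (inv_mem hf)) (inv_mem hg)
  obtain ⟨y, hy⟩ := hGAF _ hkmem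
  simp only [Equiv.Perm.mul_apply] at hy
  rw [hab, hcd, hab', hcd'] at hy
  have hkx : ∀ x : ℝ, f (g (f⁻¹ (g⁻¹ x))) = x := by
    intro x
    rw [hab, hcd, hab', hcd']
    linear_combination hy + (x - y) * c * c' * haa' + (x - y) * hcc'
  have hcomm : ∀ z : ℝ, f (g z) = g (f z) := by
    intro z
    have := hkx (g (f z))
    rwa [show g⁻¹ (g (f z)) = f z from g.symm_apply_apply _, show f⁻¹ (f z) = z from f.symm_apply_apply _] at this
  have : f (g p) = g p := by rw [hcomm, hfp]
  exact huniq _ this
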